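/- arXiv:2310.15475 — 3 statements merged into one kernel-verified Lean document; each statement's English description precedes it below -/
import Mathlib

section
/- Let R be a commutative noetherian ring. The prime spectrum of R is a finite set if and only if R is semilocal (has only finitely many maximal ideals) and has Krull dimension at most one. -/
open Ideal

namespace Aux

variable {R : Type*} [CommRing R]

/-- A finitely generated module killed by a maximal ideal is artinian. -/
lemma isArtinian_of_torsionBy_maximal {m : Ideal R} (hm : m.IsMaximal)
    {M : Type*} [AddCommGroup M] [Module R M] [Module.Finite R M]
    (h : Module.IsTorsionBySet R M m) : IsArtinian R M := by
  haveI := hm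
  letI : Module (R ⧸ m) M := h.module
  haveI : IsScalarTower R (R ⧸ m) M := h.isScalarTower
  letI : Field (R ⧸ m) := Ideal.Quotient.field m
  haveI : Module.Finite (R ⧸ m) M := Module.Finite.of_restrictScalars_finite R (R ⧸ m) M
  haveI hart : IsArtinian (R ⧸ m) M := inferInstance
  let e : Submodule R M ↪o Submodule (R ⧸ m) M :=
    { toFun := fun N =>
        { carrier := N
          add_mem' := fun ha hb => N.add_mem ha hb
          zero_mem' := N.zero_mem
          smul_mem' := by
            rintro c x hx
            obtain ⟨r, rfl⟩ := Ideal.Quotient.mk_surjective c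
            show (Ideal.Quotient.mk m r) • x ∈ N
            rw [h.mk_smul]
            exact N.smul_mem r hx }
      inj' := fun N₁ N₂ hh => by
        ext x
        exact SetLike.ext_iff.mp hh x
      map_rel_iff' := Iff.rfl }
  rw [isArtinian_iff]
  exact e.wellFounded ((isArtinian_iff _ _).mp hart)


/-- A finitely generated module over a noetherian ring killed by a power of a maximal ideal
is artinian. -/
lemma isArtinian_of_pow_smul_top_eq_bot [IsNoetherianRing R] {m : Ideal R} (hm : m.IsMaximal)
    (k : ℕ) {M : Type*} [AddCommGroup M] [Module R M] [Module.Finite R M]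
    (hk : m ^ k • (⊤ : Submodule R M) = ⊥) : IsArtinian R M := by
  induction k generalizing M with
  | zero =>
    rw [pow_zero, Ideal.one_eq_top, Submodule.top_smul] at hk
    haveI : Subsingleton M := by
      constructor
      intro a b
      have ha : a ∈ (⊥ : Submodule R M) := hk ▸ Submodule.mem_top
      have hb : b ∈ (⊥ : Submodule R M) := hk ▸ Submodule.mem_top
      rw [Submodule.mem_bot] at ha hb
      rw [ha, hb]
    infer_instance
  | succ k ih =>
    set N : Submodule R M := m ^ k • ⊤ with hN
    have hq : IsArtinian R (M ⧸ N) := by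
      apply ih
      rw [eq_bot_iff]
      refine Submodule.smul_le.mpr ?_
      rintro a ha x -
      obtain ⟨y, rfl⟩ := N.mkQ_surjective x
      rw [Submodule.mem_bot, Submodule.mkQ_apply, ← Submodule.Quotient.mk_smul,
        Submodule.Quotient.mk_eq_zero]
      exact Submodule.smul_mem_smul ha Submodule.mem_top
    have hNle : m • N ≤ ⊥ := by
      rw [hN, ← Submodule.smul_assoc, smul_eq_mul, ← pow_succ']
      exact hk.le
    have hsub : IsArtinian R N := by
      haveI : Module.Finite R N := Module.Finite.iff_fg.mpr (IsNoetherian.noetherian N)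
      apply isArtinian_of_torsionBy_maximal hm
      rintro ⟨x, hx⟩ ⟨a, ha⟩
      have : a • x ∈ (⊥ : Submodule R M) := hNle (Submodule.smul_mem_smul ha hx)
      rw [Submodule.mem_bot] at this
      exact Subtype.ext this
    exact (isArtinian_iff_submodule_quotient N).mpr ⟨hsub, hq⟩

/-- A quotient of a noetherian ring by an ideal containing a power of a maximal ideal
is artinian as a module. -/
lemma isArtinian_quotient [IsNoetherianRing R] {m X : Ideal R} (hm : m.IsMaximal) {k : ℕ}
    (hk : m ^ k ≤ X) : IsArtinian R (R ⧸ X) := by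
  apply isArtinian_of_pow_smul_top_eq_bot hm k
  rw [eq_bot_iff]
  refine Submodule.smul_le.mpr ?_
  rintro a ha x -
  obtain ⟨y, rfl⟩ := Submodule.mkQ_surjective X x
  rw [Submodule.mem_bot, Submodule.mkQ_apply, ← Submodule.Quotient.mk_smul,
    Submodule.Quotient.mk_eq_zero]
  rw [smul_eq_mul]
  exact X.mul_mem_right y (hk ha)


/-- Core special case of Krull's principal ideal theorem: a noetherian local domain with
finitely many primes has no prime ideal other than `⊥` and the maximal ideal. -/
lemma core {B : Type*} [CommRing B] [IsNoetherianRing B] [IsLocalRing B] [IsDomain B]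
    [Finite (PrimeSpectrum B)] {q : Ideal B} (hq : q.IsPrime) (hq0 : q ≠ ⊥)
    (hqm : ¬ q.IsMaximal) : False := by
  classical
  cases nonempty_fintype (PrimeSpectrum B)
  set m := IsLocalRing.maximalIdeal B with hmdef
  have hm : m.IsMaximal := IsLocalRing.maximalIdeal.isMaximal B
  set s : Finset (PrimeSpectrum B) := Finset.univ.filter (fun P => P.asIdeal ≠ m) with hs
  -- prime avoidance : pick x ∈ m avoiding all other primes
  have hexists : ∃ x ∈ m, ∀ P ∈ s, x ∉ P.asIdeal := by
    by_contra hcon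
    push_neg at hcon
    have hsubset : (m : Set B) ⊆ ⋃ P ∈ (s : Set (PrimeSpectrum B)), ↑P.asIdeal := by
      intro x hx
      obtain ⟨P, hPs, hxP⟩ := hcon x hx
      exact Set.mem_biUnion (Finset.mem_coe.mpr hPs) hxP
    rw [Ideal.subset_union_prime (⟨m, hm.isPrime⟩ : PrimeSpectrum B) ⟨m, hm.isPrime⟩
      (fun P _ _ _ => P.2)] at hsubset
    obtain ⟨P, hPs, hle⟩ := hsubset
    have hPm : P.asIdeal = m := (hm.eq_of_le P.2.ne_top hle).symm
    rw [hs, Finset.mem_filter] at hPs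
    exact hPs.2 hPm
  obtain ⟨x, hxm, hxs⟩ := hexists
  have hxq : x ∉ q :=
    hxs ⟨q, hq⟩ (Finset.mem_filter.mpr ⟨Finset.mem_univ _, fun h => hqm (by rw [show q = m from h]; exact hm)⟩)
  set X := Ideal.span {x} with hX
  have hXm : X ≤ m := (Ideal.span_singleton_le_iff_mem _).mpr hxm
  have hrad : X.radical = m := by
    rw [Ideal.radical_eq_sInf]
    refine le_antisymm (sInf_le ⟨hXm, hm.isPrime⟩) (le_sInf ?_)
    rintro J ⟨hXJ, hJ⟩
    have hxJ : x ∈ J := hXJ (Ideal.subset_span rfl)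
    by_cases hJm : J = m
    · exact hJm ▸ le_rfl
    · exact absurd hxJ (hxs ⟨J, hJ⟩ (Finset.mem_filter.mpr ⟨Finset.mem_univ _, hJm⟩))
  obtain ⟨k, hk⟩ := Ideal.exists_radical_pow_le_of_fg X (IsNoetherian.noetherian _)
  rw [hrad] at hk
  have hart : IsArtinian B (B ⧸ X) := isArtinian_quotient hm hk
  -- localization at q
  haveI := hq
  set L := Localization.AtPrime q with hL
  have hle : q.primeCompl ≤ nonZeroDivisors B := fun a ha =>
    mem_nonZeroDivisors_of_ne_zero (fun h => ha (h ▸ q.zero_mem))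
  haveI : IsDomain L := IsLocalization.isDomain_of_le_nonZeroDivisors (M := q.primeCompl) (S := L) hle
  haveI : IsNoetherianRing L :=
    IsLocalization.isNoetherianRing q.primeCompl L ‹IsNoetherianRing B›
  set f := algebraMap B L with hf
  -- symbolic powers of q
  set Q : ℕ → Ideal B := fun n => (Ideal.map f (q ^ n)).comap f with hQdef
  have hQanti : ∀ n, Q (n + 1) ≤ Q n := fun n =>
    Ideal.comap_mono (Ideal.map_mono (Ideal.pow_le_pow_right (Nat.le_succ n)))
  -- stabilization modulo X
  obtain ⟨n, hn⟩ := IsArtinian.monotone_stabilizes (R := B) (M := B ⧸ X)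
    ⟨fun n => OrderDual.toDual (Submodule.map (Submodule.mkQ X) (Q n : Submodule B B)),
      fun a b hab => Submodule.map_mono (antitone_nat_of_succ_le hQanti hab)⟩
  have hmapeq : Submodule.map (Submodule.mkQ X) (Q n : Submodule B B)
      = Submodule.map (Submodule.mkQ X) (Q (n + 1) : Submodule B B) :=
    hn (n + 1) (Nat.le_succ n)
  have hsup : (Q n : Submodule B B) ⊔ (X : Submodule B B)
      = (Q (n + 1) : Submodule B B) ⊔ (X : Submodule B B) := by
    have h2 := congrArg (Submodule.comap (Submodule.mkQ X)) hmapeq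
    rwa [Submodule.comap_map_eq, Submodule.comap_map_eq, Submodule.ker_mkQ] at h2
  -- q-primariness of symbolic powers
  have hQmem : ∀ {c : B} {j : ℕ}, c * x ∈ Q j → c ∈ Q j := by
    intro c j hc
    have hu : IsUnit (f x) := IsLocalization.map_units (M := q.primeCompl) L ⟨x, hxq⟩
    have h3 : f c * f x ∈ Ideal.map f (q ^ j) := by
      rw [← _root_.map_mul]
      exact hc
    rw [mul_comm] at h3
    rwa [Ideal.unit_mul_mem_iff_mem _ hu] at h3
  -- Nakayama in B
  have hNak : Q n ≤ Q (n + 1) := by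
    refine Submodule.le_of_le_smul_of_le_jacobson_bot (IsNoetherian.noetherian _)
      (IsLocalRing.maximalIdeal_le_jacobson ⊥) ?_
    intro a ha
    have h4 : a ∈ (Q (n + 1) : Submodule B B) ⊔ (X : Submodule B B) :=
      hsup ▸ (Submodule.mem_sup_left ha)
    obtain ⟨b, hb, c, hcX, rfl⟩ := Submodule.mem_sup.mp h4
    obtain ⟨d, rfl⟩ := Ideal.mem_span_singleton'.mp hcX
    have hdx : d * x ∈ Q n := by
      have h5 : (b + d * x) - b ∈ Q n := Submodule.sub_mem _ ha (hQanti n hb)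
      simpa using h5
    have hd : d ∈ Q n := hQmem hdx
    refine Submodule.add_mem_sup hb ?_
    rw [mul_comm]
    exact Submodule.smul_mem_smul hxm hd
  have hQeq : Q n = Q (n + 1) := le_antisymm hNak (hQanti n)
  -- transfer to L and apply Nakayama there
  have hmapQ : Ideal.map f q ^ n = Ideal.map f q ^ (n + 1) := by
    have h7 := congrArg (Ideal.map f) hQeq
    rwa [IsLocalization.map_comap q.primeCompl L, IsLocalization.map_comap q.primeCompl L,
      Ideal.map_pow, Ideal.map_pow] at h7
  have hbot : Ideal.map f q ^ n = ⊥ := by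
    refine Submodule.eq_bot_of_le_smul_of_le_jacobson_bot (Ideal.map f q) _
      (IsNoetherian.noetherian _) ?_ ?_
    · rw [smul_eq_mul, ← pow_succ', ← hmapQ]
    · have h10 : Ideal.map f q = IsLocalRing.maximalIdeal L :=
        Localization.AtPrime.map_eq_maximalIdeal
      rw [h10]
      exact IsLocalRing.maximalIdeal_le_jacobson ⊥
  obtain ⟨a, haq, ha0⟩ := (Submodule.ne_bot_iff q).mp hq0
  have hfa : f a ∈ Ideal.map f q := Ideal.mem_map_of_mem f haq
  have hfa0 : f a ≠ 0 := fun h =>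
    ha0 (IsLocalization.injective L hle (by rw [h, map_zero]))
  rcases n with _ | n
  · rw [pow_zero, Ideal.one_eq_top] at hbot
    have h8 : (1 : L) ∈ (⊥ : Ideal L) := hbot ▸ Submodule.mem_top
    rw [Submodule.mem_bot] at h8
    exact one_ne_zero h8
  · have h9 : f a ^ (n + 1) ∈ (⊥ : Ideal L) := hbot ▸ Ideal.pow_mem_pow hfa (n + 1)
    rw [Submodule.mem_bot] at h9
    exact hfa0 (pow_eq_zero_iff (Nat.succ_ne_zero n) |>.mp h9)


/-- In a noetherian ring with finite prime spectrum there is no chain of primes of length 2. -/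
lemma key {R : Type*} [CommRing R] [IsNoetherianRing R] [Finite (PrimeSpectrum R)]
    {p q r : PrimeSpectrum R} (h1 : p < q) (h2 : q < r) : False := by
  haveI := p.2
  haveI := q.2
  haveI := r.2
  set A := Localization.AtPrime r.asIdeal with hA
  haveI : IsNoetherianRing A :=
    IsLocalization.isNoetherianRing r.asIdeal.primeCompl A ‹IsNoetherianRing R›
  haveI : Finite (PrimeSpectrum A) :=
    Finite.of_injective _ (PrimeSpectrum.localization_comap_injective (S := A) r.asIdeal.primeCompl)
  have hdisj : ∀ {I : Ideal R}, I ≤ r.asIdeal → Disjoint (r.asIdeal.primeCompl : Set R) I := by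
    intro I hI
    rw [Set.disjoint_left]
    intro a ha ha'
    exact ha (hI ha')
  have hpr : p.asIdeal ≤ r.asIdeal := le_of_lt (h1.trans h2)
  have hqr : q.asIdeal ≤ r.asIdeal := le_of_lt h2
  set ψ := (IsLocalization.orderIsoOfPrime r.asIdeal.primeCompl A).symm with hψ
  have lt1 : ψ ⟨p.asIdeal, p.2, hdisj hpr⟩ < ψ ⟨q.asIdeal, q.2, hdisj hqr⟩ :=
    ψ.lt_iff_lt.mpr (Subtype.mk_lt_mk.mpr h1)
  have lt2 : ψ ⟨q.asIdeal, q.2, hdisj hqr⟩ < ψ ⟨r.asIdeal, r.2, hdisj le_rfl⟩ :=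
    ψ.lt_iff_lt.mpr (Subtype.mk_lt_mk.mpr h2)
  set pA : Ideal A := Ideal.map (algebraMap R A) p.asIdeal with hpA
  set qA : Ideal A := Ideal.map (algebraMap R A) q.asIdeal with hqA
  have hpA' : pA.IsPrime := (ψ ⟨p.asIdeal, p.2, hdisj hpr⟩).2
  have hqA' : qA.IsPrime := (ψ ⟨q.asIdeal, q.2, hdisj hqr⟩).2
  have ltpq : pA < qA := lt1
  have ltqm : qA < IsLocalRing.maximalIdeal A := by
    have hrm : Ideal.map (algebraMap R A) r.asIdeal = IsLocalRing.maximalIdeal A :=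
      Localization.AtPrime.map_eq_maximalIdeal
    exact hrm ▸ lt2
  haveI := hpA'
  set C := A ⧸ pA with hC
  haveI : IsNoetherianRing C := inferInstance
  haveI : IsDomain C := Ideal.Quotient.isDomain pA
  haveI : IsLocalRing C :=
    IsLocalRing.of_surjective' (Ideal.Quotient.mk pA) Ideal.Quotient.mk_surjective
  haveI : Finite (PrimeSpectrum C) :=
    Finite.of_injective _
      (PrimeSpectrum.comap_injective_of_surjective _ Ideal.Quotient.mk_surjective)
  set qC : Ideal C := Ideal.map (Ideal.Quotient.mk pA) qA with hqC
  have hker : RingHom.ker (Ideal.Quotient.mk pA) = pA := Ideal.mk_ker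
  have hqCp : qC.IsPrime :=
    Ideal.map_isPrime_of_surjective Ideal.Quotient.mk_surjective (hker.le.trans ltpq.le)
  have hcm : Ideal.comap (Ideal.Quotient.mk pA) qC = qA := by
    rw [hqC, Ideal.comap_map_of_surjective _ Ideal.Quotient.mk_surjective,
      ← RingHom.ker_eq_comap_bot, hker]
    exact sup_eq_left.mpr ltpq.le
  have hqC0 : qC ≠ ⊥ := by
    intro h
    have h2' : qA ≤ pA := by
      calc qA ≤ Ideal.comap (Ideal.Quotient.mk pA) qC := Ideal.le_comap_map
        _ = Ideal.comap (Ideal.Quotient.mk pA) ⊥ := by rw [h]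
        _ = pA := by rw [← RingHom.ker_eq_comap_bot, hker]
    exact absurd h2' (not_le_of_gt ltpq)
  have hqCm : ¬ qC.IsMaximal := by
    intro hmax
    have hqAmax : qA.IsMaximal := by
      have h3 := Ideal.comap_isMaximal_of_surjective (Ideal.Quotient.mk pA)
        Ideal.Quotient.mk_surjective (K := qC) (H := hmax)
      rwa [hcm] at h3
    exact ltqm.ne (hqAmax.eq_of_le (IsLocalRing.maximalIdeal.isMaximal A).ne_top ltqm.le)
  exact core hqCp hqC0 hqCm

end Aux

/-- For a commutative noetherian ring `R`, the prime spectrum of `R` is a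
finite set if and only if `R` is semilocal (finitely many maximal ideals) and has Krull
dimension at most one. -/
theorem stmt_0 (R : Type) [CommRing R] [IsNoetherianRing R] :
    Finite (PrimeSpectrum R) ↔ Finite (MaximalSpectrum R) ∧ ringKrullDim R ≤ 1 := by
  constructor
  · intro hfin
    refine ⟨Finite.of_injective _ MaximalSpectrum.toPrimeSpectrum_injective, ?_⟩
    rw [ringKrullDim]
    refine iSup_le fun c => ?_
    have hlen : c.length ≤ 1 := by
      by_contra hcon
      push_neg at hcon
      have h2 : 2 ≤ c.length := hcon
      have i01 : (⟨0, by omega⟩ : Fin (c.length + 1)) < ⟨1, by omega⟩ :=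
        Fin.mk_lt_mk.mpr (by omega)
      have i12 : (⟨1, by omega⟩ : Fin (c.length + 1)) < ⟨2, by omega⟩ :=
        Fin.mk_lt_mk.mpr (by omega)
      exact Aux.key (c.strictMono i01) (c.strictMono i12)
    exact_mod_cast hlen
  · rintro ⟨hmax, hdim⟩
    have h1 : {P : PrimeSpectrum R | P.asIdeal.IsMaximal}.Finite := by
      have hsub : {P : PrimeSpectrum R | P.asIdeal.IsMaximal}
          ⊆ Set.range (MaximalSpectrum.toPrimeSpectrum (R := R)) := by
        rintro P hP
        exact ⟨⟨P.asIdeal, hP⟩, rfl⟩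
      exact (Set.finite_range _).subset hsub
    have h2 := PrimeSpectrum.finite_setOf_isMin R
    rw [← Set.finite_univ_iff]
    refine (h2.union h1).subset ?_
    rintro P -
    by_cases hmin : IsMin P
    · exact Or.inl hmin
    · right
      rw [not_isMin_iff] at hmin
      obtain ⟨Q, hQ⟩ := hmin
      by_contra hPmax
      obtain ⟨M, hM, hPM⟩ := P.asIdeal.exists_le_maximal P.2.ne_top
      have hlt : P < (⟨M, hM.isPrime⟩ : PrimeSpectrum R) := by
        refine lt_of_le_of_ne hPM fun h => hPmax ?_
        rw [h]
        exact hM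
      let c : LTSeries (PrimeSpectrum R) :=
        ((RelSeries.singleton _ Q).snoc P hQ).snoc ⟨M, hM.isPrime⟩
          (by simp only [RelSeries.last_snoc]; exact hlt)
      have hle := Order.LTSeries.length_le_krullDim c
      have hlen : c.length = 2 := rfl
      rw [hlen] at hle
      have hcontra : ((2 : ℕ) : WithBot (WithTop ℕ)) ≤ 1 := le_trans hle hdim
      exact absurd hcontra (by exact_mod_cast (by norm_num : ¬ (2 : ℕ) ≤ 1))
end

section
/- Let R be a commutative noetherian ring of Krull dimension at least two. Then there exist infinitely many prime ideals of R of height one. -/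
open Ideal Submodule

/-- A f.g. module killed by a maximal ideal is Artinian. -/
lemma artinian_of_killed_by_maximal {A : Type} [CommRing A] (m : Ideal A) [m.IsMaximal]
    (M : Type) [AddCommGroup M] [Module A M] [Module.Finite A M]
    (h : ∀ a ∈ m, ∀ x : M, a • x = 0) : IsArtinian A M := by
  have ht : Module.IsTorsionBySet A M (m : Set A) := fun x a => h a a.2 x
  letI : Module (A ⧸ m) M := ht.module
  haveI : IsScalarTower A (A ⧸ m) M := ht.isScalarTower
  haveI : Module.Finite (A ⧸ m) M := Module.Finite.of_restrictScalars_finite A (A ⧸ m) M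
  letI : Field (A ⧸ m) := Ideal.Quotient.field m
  haveI : IsArtinian (A ⧸ m) M := isArtinian_of_fg_of_artinian' (R := A ⧸ m)
  -- transfer Artinian-ness back along the surjection A → A ⧸ m
  rw [isArtinian_iff]
  have emb : ∀ N : Submodule A M, ∃ N' : Submodule (A ⧸ m) M, (N' : Set M) = N := by
    intro N
    refine ⟨⟨⟨⟨(N : Set M), ?_⟩, ?_⟩, ?_⟩, rfl⟩
    · intro a b ha hb; exact N.add_mem ha hb
    · exact N.zero_mem
    · rintro c x hx
      obtain ⟨a, rfl⟩ := Ideal.Quotient.mk_surjective c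
      rw [Module.IsTorsionBySet.mk_smul ht a x]
      exact N.smul_mem a hx
  choose F hF using emb
  have : ∀ N₁ N₂ : Submodule A M, N₁ < N₂ → F N₁ < F N₂ := by
    intro N₁ N₂ hlt
    rw [SetLike.lt_iff_le_and_exists] at hlt ⊢
    obtain ⟨hle, x, hx, hx'⟩ := hlt
    refine ⟨?_, x, ?_, ?_⟩
    · intro y hy; rw [← SetLike.mem_coe, hF] at hy ⊢; exact hle hy
    · rw [← SetLike.mem_coe, hF]; exact hx
    · rw [← SetLike.mem_coe, hF]; exact hx'
  exact Subrelation.wf (fun {N₁ N₂} hlt => this N₁ N₂ hlt)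
    (InvImage.wf F (IsWellFounded.wf (r := (· < · : Submodule (A ⧸ m) M → _ → Prop))))

/-- A f.g. module over a noetherian ring killed by a power of a maximal ideal is Artinian. -/
lemma artinian_of_killed_by_pow_maximal {A : Type} [CommRing A] [IsNoetherianRing A]
    (m : Ideal A) [m.IsMaximal] : ∀ (k : ℕ) (M : Type) [AddCommGroup M] [Module A M]
    [Module.Finite A M], (∀ a ∈ m ^ k, ∀ x : M, a • x = 0) → IsArtinian A M := by
  intro k
  induction k with
  | zero =>
    intro M _ _ _ h
    have : Subsingleton M := by
      constructor
      intro x y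
      have hx := h 1 (by simp) x
      have hy := h 1 (by simp) y
      rw [one_smul] at hx hy
      rw [hx, hy]
    exact isArtinian_of_finite
  | succ k ih =>
    intro M _ _ _ h
    set N : Submodule A M := m • ⊤ with hN
    haveI : Module.Finite A N := Module.Finite.iff_fg.mpr (IsNoetherian.noetherian N)
    have hbot : (m ^ (k+1)) • (⊤ : Submodule A M) = ⊥ := by
      rw [eq_bot_iff]
      rw [Submodule.smul_le]
      intro r hr n _
      rw [Submodule.mem_bot]
      exact h r hr n
    have hNkill : ∀ a ∈ m ^ k, ∀ x : N, a • x = 0 := by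
      intro a ha x
      have hmem : a • (x : M) ∈ (m ^ k) • (m • (⊤ : Submodule A M)) :=
        Submodule.smul_mem_smul ha x.2
      rw [← Submodule.smul_assoc, smul_eq_mul, ← pow_succ] at hmem
      rw [hbot, Submodule.mem_bot] at hmem
      exact Subtype.ext (by rw [Submodule.coe_smul_of_tower]; exact hmem)
    haveI hartN : IsArtinian A N := ih N hNkill
    -- M ⧸ N is killed by m
    haveI hartQ : IsArtinian A (M ⧸ N) := by
      apply artinian_of_killed_by_maximal m
      intro a ha x
      obtain ⟨y, rfl⟩ := Submodule.mkQ_surjective N x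
      rw [← LinearMap.map_smul, Submodule.mkQ_apply, Submodule.Quotient.mk_eq_zero]
      exact Submodule.smul_mem_smul ha Submodule.mem_top
    exact isArtinian_of_range_eq_ker N.subtype N.mkQ
      (by rw [Submodule.range_subtype, Submodule.ker_mkQ])

/-- Core of Krull's principal ideal theorem, in a noetherian local ring. -/
lemma pit_local {B : Type} [CommRing B] [IsLocalRing B] [IsNoetherianRing B]
    (y : B) (hym : y ∈ IsLocalRing.maximalIdeal B)
    (h1 : IsLocalRing.maximalIdeal B ≤ (Ideal.span {y}).radical)
    (p : Ideal B) [hp : p.IsPrime] (hpm : p < IsLocalRing.maximalIdeal B) (hyp : y ∉ p)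
    (p'' : Ideal B) (hp'' : p''.IsPrime) (hle : p'' ≤ p) : p ≤ p'' := by
  set Bp := Localization.AtPrime p with hBp
  set φ := algebraMap B Bp with hφ
  haveI : IsNoetherianRing Bp := IsLocalization.isNoetherianRing p.primeCompl Bp ‹_›
  set P : ℕ → Ideal B := fun n => Ideal.comap φ (Ideal.map φ (p ^ n)) with hP
  -- DCC modulo (y)
  obtain ⟨c, hc⟩ := Ideal.exists_pow_le_of_le_radical_of_fg h1 (IsNoetherian.noetherian _)
  haveI hart : IsArtinian B (B ⧸ (Ideal.span {y} : Ideal B)) := by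
    apply artinian_of_killed_by_pow_maximal (IsLocalRing.maximalIdeal B) c
    intro a ha x
    obtain ⟨b, rfl⟩ := Submodule.mkQ_surjective _ x
    rw [← LinearMap.map_smul, Submodule.mkQ_apply, Submodule.Quotient.mk_eq_zero]
    exact Ideal.mul_mem_right b _ (hc ha)
  -- the chain (P n + (y)) stabilizes
  have hmono : ∀ n, P (n+1) ≤ P n := fun n =>
    Ideal.comap_mono (Ideal.map_mono (Ideal.pow_le_pow_right (by omega)))
  obtain ⟨n, hn⟩ := IsArtinian.monotone_stabilizes (R := B) (M := B ⧸ (Ideal.span {y} : Ideal B))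
    ⟨fun n => OrderDual.toDual (Submodule.map (Ideal.span {y} : Ideal B).mkQ
        (Submodule.restrictScalars B (P n))), by
      intro i j hij
      simp only [OrderDual.toDual_le_toDual]
      have hanti : P j ≤ P i := antitone_nat_of_succ_le hmono hij
      exact Submodule.map_mono (fun x hx => hanti hx)⟩
  have hstab : P n ≤ Ideal.span {y} ⊔ P (n+1) := by
    have := hn (n+1) (by omega)
    have h2 : Submodule.map (Ideal.span {y} : Ideal B).mkQ (Submodule.restrictScalars B (P n))
        = Submodule.map (Ideal.span {y} : Ideal B).mkQ (Submodule.restrictScalars B (P (n+1))) :=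
      congrArg OrderDual.ofDual this
    intro a ha
    have : (Ideal.span {y} : Ideal B).mkQ a ∈ Submodule.map (Ideal.span {y} : Ideal B).mkQ
        (Submodule.restrictScalars B (P (n+1))) := h2 ▸ ⟨a, ha, rfl⟩
    obtain ⟨b, hb, hab⟩ := this
    have : a - b ∈ (Ideal.span {y} : Ideal B) := by
      rw [← Submodule.ker_mkQ (Ideal.span {y} : Ideal B), LinearMap.mem_ker, map_sub, hab,
        sub_self]
    have : a = (a - b) + b := by ring
    rw [this]
    exact Submodule.add_mem _ (Ideal.mem_sup_left ‹a - b ∈ _›) (Ideal.mem_sup_right hb)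
  -- P n ≤ P (n+1) ⊔ (y) • P n  using that y is invertible in Bp
  have hyunit : IsUnit (φ y) := IsLocalization.map_units Bp (⟨y, hyp⟩ : p.primeCompl)
  have hkey : P n ≤ P (n+1) ⊔ (Ideal.span {y} : Ideal B) • P n := by
    intro a ha
    have := hstab ha
    rw [Submodule.mem_sup] at this
    obtain ⟨z, hz, b, hb, rfl⟩ := this
    rw [Ideal.mem_span_singleton] at hz
    obtain ⟨d, rfl⟩ := hz
    -- y*d ∈ P n, so d ∈ P n since φ y is a unit
    have hyd : y * d ∈ P n := by
      have : y * d = (y * d + b) - b := by ring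
      rw [this]
      exact Submodule.sub_mem _ ha (hmono n hb)
    have hd : d ∈ P n := by
      rw [hP, Ideal.mem_comap] at hyd ⊢
      rw [_root_.map_mul φ] at hyd
      obtain ⟨u, hu⟩ := hyunit
      have : φ d = ↑u⁻¹ * (φ y * φ d) := by rw [← hu, ← mul_assoc, Units.inv_mul, one_mul]
      rw [this]
      exact Ideal.mul_mem_left _ _ hyd
    have h1' : y * d ∈ (Ideal.span {y} : Ideal B) • P n :=
      Submodule.smul_mem_smul (Ideal.mem_span_singleton_self y) hd
    exact Submodule.add_mem _ (Submodule.mem_sup_right h1') (Submodule.mem_sup_left hb)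
  -- Nakayama downstairs: P n = P (n+1)
  have hyjac : (Ideal.span {y} : Ideal B) ≤ Ideal.jacobson ⊥ := by
    refine le_trans ?_ (IsLocalRing.maximalIdeal_le_jacobson ⊥)
    rwa [Ideal.span_le, Set.singleton_subset_iff]
  have hPn : P n = P (n+1) := le_antisymm
    (Submodule.le_of_le_smul_of_le_jacobson_bot (IsNoetherian.noetherian _) hyjac hkey)
    (hmono n)
  -- transfer up to Bp and apply Nakayama there
  have hmap : Ideal.map φ (p ^ n) = Ideal.map φ (p ^ (n+1)) := by
    have h1' := congrArg (Ideal.map φ) hPn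
    rwa [IsLocalization.map_comap p.primeCompl Bp, IsLocalization.map_comap p.primeCompl Bp]
      at h1'
  have hppow : (Ideal.map φ p) ^ n = (Ideal.map φ p) ^ (n+1) := by
    rw [← Ideal.map_pow, ← Ideal.map_pow]; exact hmap
  have hjac2 : Ideal.map φ p ≤ Ideal.jacobson ⊥ := by
    rw [Localization.AtPrime.map_eq_maximalIdeal]
    exact IsLocalRing.maximalIdeal_le_jacobson ⊥
  have hbot2 : (Ideal.map φ p) ^ n = ⊥ := by
    refine Submodule.eq_bot_of_le_smul_of_le_jacobson_bot (Ideal.map φ p) _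
      (IsNoetherian.noetherian _) ?_ hjac2
    have h4 : (Ideal.map φ p)^(n+1) = Ideal.map φ p • (Ideal.map φ p)^n := by
      rw [smul_eq_mul, ← pow_succ']
    exact le_of_eq (hppow.trans h4)
  -- conclude
  have hdisj'' : Disjoint (p.primeCompl : Set B) (p'' : Set B) :=
    Set.disjoint_left.mpr (fun a ha1 ha2 => ha1 (hle ha2))
  have hdisj : Disjoint (p.primeCompl : Set B) (p : Set B) :=
    Set.disjoint_left.mpr (fun a ha1 ha2 => ha1 ha2)
  haveI hprime'' : (Ideal.map φ p'').IsPrime :=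
    IsLocalization.isPrime_of_isPrime_disjoint p.primeCompl Bp p'' hp'' hdisj''
  have h3 : Ideal.map φ p ≤ Ideal.map φ p'' :=
    Ideal.IsPrime.le_of_pow_le (hbot2 ▸ bot_le : (Ideal.map φ p)^n ≤ Ideal.map φ p'')
  have hc1 : Ideal.comap φ (Ideal.map φ p) = p :=
    IsLocalization.comap_map_of_isPrime_disjoint p.primeCompl Bp (I := p) hp hdisj
  have hc2 : Ideal.comap φ (Ideal.map φ p'') = p'' :=
    IsLocalization.comap_map_of_isPrime_disjoint p.primeCompl Bp (I := p'') hp'' hdisj''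
  calc p = Ideal.comap φ (Ideal.map φ p) := hc1.symm
  _ ≤ Ideal.comap φ (Ideal.map φ p'') := Ideal.comap_mono h3
  _ = p'' := hc2

/-- **Krull's principal ideal theorem**: a prime minimal over a principal ideal
has height at most one. -/
lemma height_le_one_of_minimal_over_principal {A : Type} [CommRing A] [IsNoetherianRing A]
    (x : A) (Q : PrimeSpectrum A) (hQ : Q.asIdeal ∈ (Ideal.span {x} : Ideal A).minimalPrimes) :
    Order.height Q ≤ 1 := by
  rw [show ((1:ℕ∞)) = ((1:ℕ):ℕ∞) by norm_num, Order.height_le_coe_iff]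
  intro P hPQ
  rw [Nat.cast_one, ENat.lt_one_iff_eq_zero, Order.height_eq_zero]
  -- show P is a minimal prime
  intro P'' hP''
  haveI hqprime : Q.asIdeal.IsPrime := Q.isPrime
  -- pass to the localization at Q
  set B := Localization.AtPrime Q.asIdeal with hB
  set φ := algebraMap A B with hφ
  haveI : IsNoetherianRing B := IsLocalization.isNoetherianRing Q.asIdeal.primeCompl B ‹_›
  have hPltQ : P.asIdeal < Q.asIdeal := (PrimeSpectrum.asIdeal_lt_asIdeal P Q).mpr hPQ
  have hP''leP : P''.asIdeal ≤ P.asIdeal := (PrimeSpectrum.asIdeal_le_asIdeal _ _).mpr hP''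
  set y := φ x with hy
  have hmax : Ideal.map φ Q.asIdeal = IsLocalRing.maximalIdeal B :=
    Localization.AtPrime.map_eq_maximalIdeal
  have hym : y ∈ IsLocalRing.maximalIdeal B := by
    rw [← hmax]
    exact Ideal.mem_map_of_mem φ (hQ.1.2 (Ideal.mem_span_singleton_self x))
  -- the maximal ideal is contained in every prime containing y
  have h1 : IsLocalRing.maximalIdeal B ≤ (Ideal.span {y} : Ideal B).radical := by
    rw [Ideal.radical_eq_sInf]
    refine le_sInf ?_
    rintro J ⟨hyJ, hJprime⟩
    have hJm : J ≤ IsLocalRing.maximalIdeal B := IsLocalRing.le_maximalIdeal hJprime.ne_top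
    have hJ0 : (Ideal.comap φ J).IsPrime := hJprime.comap φ
    have hxJ0 : Ideal.span {x} ≤ Ideal.comap φ J := by
      rw [Ideal.span_le, Set.singleton_subset_iff]
      exact hyJ (Ideal.mem_span_singleton_self y)
    have hJ0q : Ideal.comap φ J ≤ Q.asIdeal := by
      refine le_trans (Ideal.comap_mono hJm) ?_
      rw [← hmax]
      rw [@id (Ideal.comap φ (Ideal.map φ Q.asIdeal) = Q.asIdeal) (IsLocalization.comap_map_of_isPrime_disjoint Q.asIdeal.primeCompl B (I := Q.asIdeal) hqprime
        (Set.disjoint_left.mpr (fun a ha1 ha2 => ha1 ha2)))]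
    have : Q.asIdeal ≤ Ideal.comap φ J := hQ.2 ⟨hJ0, hxJ0⟩ hJ0q
    have hJ0eq : Ideal.comap φ J = Q.asIdeal := le_antisymm hJ0q this
    have : Ideal.map φ (Ideal.comap φ J) = J := IsLocalization.map_comap Q.asIdeal.primeCompl B J
    rw [hJ0eq, hmax] at this
    exact le_of_eq this
  -- transfer the chain upstairs
  have hPle : P.asIdeal ≤ Q.asIdeal := le_of_lt hPltQ
  have hdisjP : Disjoint (Q.asIdeal.primeCompl : Set A) (P.asIdeal : Set A) :=
    Set.disjoint_left.mpr (fun a ha1 ha2 => ha1 (hPle ha2))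
  have hdisjP'' : Disjoint (Q.asIdeal.primeCompl : Set A) (P''.asIdeal : Set A) :=
    Set.disjoint_left.mpr (fun a ha1 ha2 => ha1 (hPle (hP''leP ha2)))
  haveI hpB : (Ideal.map φ P.asIdeal).IsPrime :=
    IsLocalization.isPrime_of_isPrime_disjoint Q.asIdeal.primeCompl B P.asIdeal P.isPrime hdisjP
  have hpB'' : (Ideal.map φ P''.asIdeal).IsPrime :=
    IsLocalization.isPrime_of_isPrime_disjoint Q.asIdeal.primeCompl B P''.asIdeal P''.isPrime
      hdisjP''
  have hcP : Ideal.comap φ (Ideal.map φ P.asIdeal) = P.asIdeal :=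
    IsLocalization.comap_map_of_isPrime_disjoint Q.asIdeal.primeCompl B (I := P.asIdeal) P.isPrime hdisjP
  have hcP'' : Ideal.comap φ (Ideal.map φ P''.asIdeal) = P''.asIdeal :=
    IsLocalization.comap_map_of_isPrime_disjoint Q.asIdeal.primeCompl B (I := P''.asIdeal) P''.isPrime
      hdisjP''
  have hpm : Ideal.map φ P.asIdeal < IsLocalRing.maximalIdeal B := by
    rw [← hmax]
    refine lt_of_le_of_ne (Ideal.map_mono hPle) (fun hcontra => ?_)
    have := congrArg (Ideal.comap φ) hcontra
    rw [hcP, @id (Ideal.comap φ (Ideal.map φ Q.asIdeal) = Q.asIdeal) (IsLocalization.comap_map_of_isPrime_disjoint Q.asIdeal.primeCompl B (I := Q.asIdeal) hqprime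
        (Set.disjoint_left.mpr (fun a ha1 ha2 => ha1 ha2)))] at this
    exact absurd this (ne_of_lt hPltQ)
  have hyp : y ∉ Ideal.map φ P.asIdeal := by
    intro hcontra
    have hxP : x ∈ Ideal.comap φ (Ideal.map φ P.asIdeal) := hcontra
    rw [hcP] at hxP
    have : Q.asIdeal ≤ P.asIdeal := hQ.2 ⟨P.isPrime, by
      rwa [Ideal.span_le, Set.singleton_subset_iff]⟩ hPle
    exact absurd (le_antisymm hPle this) (ne_of_lt hPltQ)
  -- apply the local PIT
  have hfinal := pit_local y hym h1 (Ideal.map φ P.asIdeal) hpm hyp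
    (Ideal.map φ P''.asIdeal) hpB'' (Ideal.map_mono hP''leP)
  rw [← PrimeSpectrum.asIdeal_le_asIdeal]
  calc P.asIdeal = Ideal.comap φ (Ideal.map φ P.asIdeal) := hcP.symm
  _ ≤ Ideal.comap φ (Ideal.map φ P''.asIdeal) := Ideal.comap_mono hfinal
  _ = P''.asIdeal := hcP''

/-- A commutative noetherian ring of Krull dimension at least two has
infinitely many prime ideals of height one. -/
theorem stmt_1 (R : Type) [CommRing R] [IsNoetherianRing R]
    (h : 2 ≤ ringKrullDim R) :
    {p : PrimeSpectrum R | Order.height p = 1}.Infinite := by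
  -- there is a prime of height at least 2
  have hne : Nonempty (PrimeSpectrum R) := by
    by_contra hempty
    rw [not_nonempty_iff] at hempty
    rw [ringKrullDim, Order.krullDim_eq_bot] at h
    exact absurd h (by norm_num)
  obtain ⟨q, hq2⟩ : ∃ q : PrimeSpectrum R, 2 ≤ Order.height q := by
    by_contra hc
    push_neg at hc
    have hle1 : ∀ a : PrimeSpectrum R, Order.height a ≤ 1 := by
      intro a
      have := hc a
      rw [show (2:ℕ∞) = 1 + 1 by norm_num, ENat.lt_add_one_iff (by norm_num)] at this
      exact this
    have : ringKrullDim R ≤ ((1 : ℕ∞) : WithBot ℕ∞) := by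
      rw [ringKrullDim, Order.krullDim_eq_iSup_height_of_nonempty, WithBot.coe_le_coe]
      exact iSup_le hle1
    have h2 : (2 : WithBot ℕ∞) ≤ ((1:ℕ∞) : WithBot ℕ∞) := le_trans h this
    exact absurd h2 (by norm_num)
  -- suppose for contradiction only finitely many height-one primes
  intro hfin
  have hminfin : {p : PrimeSpectrum R | Order.height p = 0}.Finite := by
    have himg : PrimeSpectrum.asIdeal '' {p : PrimeSpectrum R | Order.height p = 0}
        ⊆ minimalPrimes R := by
      rintro _ ⟨p, hp, rfl⟩
      rw [Set.mem_setOf_eq, Order.height_eq_zero] at hp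
      refine ⟨⟨p.isPrime, bot_le⟩, ?_⟩
      rintro J ⟨hJ, -⟩ hJle
      exact (PrimeSpectrum.asIdeal_le_asIdeal _ _).mpr (hp ((PrimeSpectrum.asIdeal_le_asIdeal
        (⟨J, hJ⟩ : PrimeSpectrum R) p).mp hJle))
    have : (PrimeSpectrum.asIdeal '' {p : PrimeSpectrum R | Order.height p = 0}).Finite :=
      (minimalPrimes.finite_of_isNoetherianRing R).subset himg
    refine Set.Finite.of_finite_image this ?_
    intro a _ b _ hab
    exact PrimeSpectrum.ext hab
  have hTfin : {p : PrimeSpectrum R | Order.height p ≤ 1}.Finite := by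
    refine Set.Finite.subset (hminfin.union hfin) ?_
    intro p hp
    rw [Set.mem_setOf_eq] at hp
    rcases lt_or_eq_of_le hp with h1 | h1
    · exact Or.inl (ENat.lt_one_iff_eq_zero.mp h1)
    · exact Or.inr h1
  set T := hTfin.toFinset with hT
  -- q is covered by the primes of height at most one
  have hcover : (q.asIdeal : Set R) ⊆ ⋃ p ∈ (T : Set (PrimeSpectrum R)), (p.asIdeal : Set R) := by
    intro x hx
    have hxq : Ideal.span {x} ≤ q.asIdeal := by
      rwa [Ideal.span_le, Set.singleton_subset_iff]
    obtain ⟨r, hr, hrq⟩ := Ideal.exists_minimalPrimes_le hxq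
    haveI hrprime : r.IsPrime := hr.1.1
    set pr : PrimeSpectrum R := ⟨r, hrprime⟩ with hpr
    have hprT : pr ∈ T := by
      rw [hT, Set.Finite.mem_toFinset]
      exact height_le_one_of_minimal_over_principal x pr hr
    refine Set.mem_biUnion hprT ?_
    exact hr.1.2 (Ideal.mem_span_singleton_self x)
  have := (Ideal.subset_union_prime (R := R) (s := T) (f := PrimeSpectrum.asIdeal) q q
    (fun i _ _ _ => i.isPrime)).mp hcover
  obtain ⟨p, hpT, hqp⟩ := this
  rw [hT, Set.Finite.mem_toFinset] at hpT
  have : (2:ℕ∞) ≤ 1 := le_trans hq2 (le_trans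
    (Order.height_mono ((PrimeSpectrum.asIdeal_le_asIdeal q p).mp hqp)) hpT)
  exact absurd this (by norm_num)
end

section
/- Let R be a commutative noetherian semilocal ring of Krull dimension at most one. Then there exists a finitely generated R-module G such that every finitely generated R-module belongs to the smallest subcategory of finitely generated R-modules containing G and closed under direct summands and extensions. Concretely, G = ⊕_{p ∈ Spec R} R/p works. -/
open DirectSum

/-- The extension closure `ext G`: the smallest class of (finitely generated) `R`-modules
containing `G` and closed under direct summands and extensions. -/
inductive ExtClosure.{u_1, u_2} (R : Type) [CommRing R] (G : ModuleCat.{u_1} R) : ModuleCat.{u_1} R → Prop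
  | base : ExtClosure R G G
  | summand {M : ModuleCat R} (N : ModuleCat.{u_1} R) (N' : ModuleCat.{u_2} R) (e : M ≃ₗ[R] N × N') :
      ExtClosure R G M → ExtClosure R G N
  | extension {L M N : ModuleCat R} (f : L →ₗ[R] M) (g : M →ₗ[R] N)
      (hf : Function.Injective f) (hg : Function.Surjective g) (hfg : Function.Exact f g) :
      ExtClosure R G L → ExtClosure R G N → ExtClosure R G M

section Aux

universe v

variable {R : Type} [CommRing R] {G : ModuleCat.{0} R}

/-- ExtClosure is closed under linear equivalence. -/
lemma ExtClosure.of_linearEquiv {M : ModuleCat.{0} R} (N : ModuleCat.{0} R)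
    (e : M ≃ₗ[R] N) (h : ExtClosure.{0,v} R G M) : ExtClosure.{0,v} R G N := by
  have e2 : ↑N ≃ₗ[R] ↑N × PUnit.{v+1} :=
    { toFun := fun n => (n, PUnit.unit)
      invFun := Prod.fst
      map_add' := fun _ _ => rfl
      map_smul' := fun _ _ => rfl
      left_inv := fun _ => rfl
      right_inv := fun _ => rfl }
  exact ExtClosure.summand N (ModuleCat.of R PUnit.{v+1}) (e.trans e2) h

/-- The zero module is in every extension closure. -/
lemma ExtClosure.zero (Z : ModuleCat.{0} R) (hZ : Subsingleton Z) :
    ExtClosure.{0,v} R G Z := by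
  refine ExtClosure.summand Z (ModuleCat.of R (ULift.{v} G)) ?_ ExtClosure.base
  have e0 : ↑G ≃ₗ[R] ↑Z × ↑G :=
    { toFun := fun g => (0, g)
      invFun := Prod.snd
      map_add' := fun _ _ => by ext <;> simp
      map_smul' := fun _ _ => by ext <;> simp
      left_inv := fun _ => rfl
      right_inv := fun x => by
        ext
        · exact Subsingleton.elim _ _
        · rfl }
  exact e0.trans (LinearEquiv.prodCongr (LinearEquiv.refl R _)
    (LinearEquiv.symm (ULift.moduleEquiv : ULift.{v} (↑G) ≃ₗ[R] ↑G)))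

/-- Main step: over a noetherian ring, if all `R ⧸ p` (for `p` prime) lie in the
extension closure of `G`, then so does every finitely generated module. -/
lemma ExtClosure.of_finite [IsNoetherianRing R]
    (hprime : ∀ p : Ideal R, p.IsPrime → ExtClosure.{0,v} R G (ModuleCat.of R (R ⧸ p)))
    (M : ModuleCat.{0} R) (hM : Module.Finite R M) : ExtClosure.{0,v} R G M := by
  have : IsNoetherian R M := isNoetherian_of_isNoetherianRing_of_finite R M
  set S : Set (Submodule R M) :=
    {N : Submodule R M | ExtClosure.{0,v} R G (ModuleCat.of R N)} with hS
  have hbot : (⊥ : Submodule R M) ∈ S :=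
    ExtClosure.zero _ inferInstance
  obtain ⟨N, hNS, hNmax⟩ := set_has_maximal_iff_noetherian.mpr ‹IsNoetherian R M› S ⟨⊥, hbot⟩
  have hNtop : N = ⊤ := by
    by_contra hne
    have : Nontrivial (M ⧸ N) :=
      Submodule.Quotient.nontrivial_iff.mpr hne
    obtain ⟨p, hpa⟩ := associatedPrimes.nonempty R (M ⧸ N)
    obtain ⟨hp, xbar, hxbar⟩ := isAssociatedPrime_iff.mp hpa
    obtain ⟨x, rfl⟩ := Submodule.Quotient.mk_surjective N xbar
    have hxN : x ∉ N := by
      intro hx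
      have : (Submodule.Quotient.mk x : M ⧸ N) = 0 := (Submodule.Quotient.mk_eq_zero N).mpr hx
      rw [this] at hxbar
      apply hp.ne_top
      rw [hxbar, eq_top_iff]; intro r _; rw [Submodule.mem_colon_singleton]; simp
    set N' : Submodule R M := N ⊔ R ∙ x with hN'
    have hle : N ≤ N' := le_sup_left
    have hlt : N < N' := by
      refine lt_of_le_of_ne hle fun h => hxN ?_
      rw [h]
      exact Submodule.mem_sup_right (Submodule.mem_span_singleton_self x)
    -- the quotient N' / N is isomorphic to R / p
    set Nin : Submodule R N' := Submodule.comap N'.subtype N with hNin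
    have hquot : ExtClosure.{0,v} R G (ModuleCat.of R (↥N' ⧸ Nin)) := by
      set φ : ↥N' →ₗ[R] M ⧸ N := N.mkQ.comp N'.subtype with hφ
      have hker : LinearMap.ker φ = Nin := by
        rw [hφ, LinearMap.ker_comp, Submodule.ker_mkQ]
      have hrange : LinearMap.range φ = R ∙ (Submodule.Quotient.mk x : M ⧸ N) := by
        rw [hφ, LinearMap.range_comp, Submodule.range_subtype, hN', Submodule.map_sup]
        have h1 : Submodule.map N.mkQ N = ⊥ := by
          rw [eq_bot_iff, Submodule.map_le_iff_le_comap]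
          intro y hy
          simp [Submodule.mem_comap, Submodule.mem_bot, Submodule.Quotient.mk_eq_zero, hy]
        have h2 : Submodule.map N.mkQ (R ∙ x) = R ∙ (Submodule.Quotient.mk x : M ⧸ N) := by
          rw [Submodule.map_span, Set.image_singleton]
          rfl
        rw [h1, h2, bot_sup_eq]
      have htors : Ideal.torsionOf R (M ⧸ N) (Submodule.Quotient.mk x) = p := by
        rw [hxbar]
        ext r
        rw [Ideal.mem_torsionOf_iff, Submodule.mem_colon_singleton, Submodule.mem_bot]
      have e : (↥N' ⧸ Nin) ≃ₗ[R] R ⧸ p :=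
        (Submodule.quotEquivOfEq Nin (LinearMap.ker φ) hker.symm).trans <|
          (φ.quotKerEquivRange.trans <|
            (LinearEquiv.ofEq _ _ hrange).trans <|
              (Ideal.quotTorsionOfEquivSpanSingleton R (M ⧸ N)
                (Submodule.Quotient.mk x)).symm.trans <|
            Submodule.quotEquivOfEq _ _ htors)
      exact ExtClosure.of_linearEquiv (G := G) _ e.symm (hprime p hp)
    have hext : ExtClosure.{0,v} R G (ModuleCat.of R N') := by
      refine ExtClosure.extension (Submodule.inclusion hle) Nin.mkQ
        (Submodule.inclusion_injective hle) (Submodule.mkQ_surjective Nin) ?_ hNS hquot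
      rw [LinearMap.exact_iff, Submodule.ker_mkQ, hNin, Submodule.range_inclusion]
    exact hNmax N' hext hlt
  subst hNtop
  exact ExtClosure.of_linearEquiv _ (Submodule.topEquiv (R := R) (M := M)) hNS

/-- A `LinearEquiv` version of `Equiv.piSplitAt`. -/
def LinearEquiv.piSplitAt' {ι : Type} [DecidableEq ι] (i : ι) (M : ι → Type)
    [∀ j, AddCommGroup (M j)] [∀ j, Module R (M j)] :
    (∀ j, M j) ≃ₗ[R] M i × ∀ j : {j // j ≠ i}, M j :=
  { Equiv.piSplitAt i M with
    map_add' := fun _ _ => rfl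
    map_smul' := fun _ _ => rfl }

end Aux

/-- Every prime of a noetherian ring of dimension `≤ 1` is minimal or maximal. -/
lemma prime_minimal_or_maximal {R : Type} [CommRing R] (hdim : ringKrullDim R ≤ 1)
    (p : PrimeSpectrum R) : p.asIdeal ∈ minimalPrimes R ∨ p.asIdeal.IsMaximal := by
  by_contra h
  push_neg at h
  obtain ⟨hmin, hmax⟩ := h
  obtain ⟨q, hq, hqp⟩ := Ideal.exists_minimalPrimes_le (I := ⊥) (J := p.asIdeal) bot_le
  have hqprime : q.IsPrime := hq.1.1
  have hqlt : q < p.asIdeal := lt_of_le_of_ne hqp (fun h => hmin (h ▸ hq))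
  obtain ⟨m, hm, hpm⟩ := Ideal.exists_le_maximal p.asIdeal p.isPrime.ne_top
  have hplt : p.asIdeal < m := lt_of_le_of_ne hpm (fun h => hmax (h ▸ hm))
  -- build an LTSeries of length 2 in PrimeSpectrum R
  let s : LTSeries (PrimeSpectrum R) :=
    ((RelSeries.singleton _ (⟨q, hqprime⟩ : PrimeSpectrum R)).snoc p hqlt).snoc
      ⟨m, hm.isPrime⟩ (by exact hplt)
  have h2 : (s.length : WithBot ℕ∞) ≤ ringKrullDim R := Order.LTSeries.length_le_krullDim s
  have hlen : s.length = 2 := rfl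
  rw [hlen] at h2
  have : (2 : WithBot ℕ∞) ≤ 1 := h2.trans hdim
  norm_num at this

lemma finite_primeSpectrum {R : Type} [CommRing R] [IsNoetherianRing R]
    (hsl : Finite (MaximalSpectrum R)) (hdim : ringKrullDim R ≤ 1) :
    Finite (PrimeSpectrum R) := by
  have hminfin : (minimalPrimes R).Finite := minimalPrimes.finite_of_isNoetherianRing R
  have hmaxfin : {I : Ideal R | I.IsMaximal}.Finite := by
    have : {I : Ideal R | I.IsMaximal} = Set.range MaximalSpectrum.asIdeal := by
      ext I
      constructor
      · intro hI; exact ⟨⟨I, hI⟩, rfl⟩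
      · rintro ⟨⟨J, hJ⟩, rfl⟩; exact hJ
    rw [this]
    exact Set.finite_range _
  have hfin : (minimalPrimes R ∪ {I : Ideal R | I.IsMaximal}).Finite := hminfin.union hmaxfin
  have : Finite ↥(minimalPrimes R ∪ {I : Ideal R | I.IsMaximal}) := hfin
  refine Finite.of_injective
    (fun p => (⟨p.asIdeal, (prime_minimal_or_maximal hdim p).imp id id⟩ :
      ↥(minimalPrimes R ∪ {I : Ideal R | I.IsMaximal}))) ?_
  intro p q h
  exact PrimeSpectrum.ext (congrArg Subtype.val h)

/-- If `R` is a commutative noetherian semilocal ring of Krull dimension at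
most one, then `G = ⨁_{p ∈ Spec R} R/p` is a finitely generated `R`-module such that every
finitely generated `R`-module lies in the extension closure of `G`. -/
theorem stmt_4 (R : Type) [CommRing R] [IsNoetherianRing R]
    (hsl : Finite (MaximalSpectrum R)) (hdim : ringKrullDim R ≤ 1) :
    Module.Finite R (⨁ p : PrimeSpectrum R, R ⧸ p.asIdeal) ∧
    ∀ M : ModuleCat R, Module.Finite R M →
      ExtClosure R (ModuleCat.of R (⨁ p : PrimeSpectrum R, R ⧸ p.asIdeal)) M := by
  have hfin : Finite (PrimeSpectrum R) := finite_primeSpectrum hsl hdim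
  have : Fintype (PrimeSpectrum R) := Fintype.ofFinite _
  have : DecidableEq (PrimeSpectrum R) := Classical.decEq _
  have e : (⨁ p : PrimeSpectrum R, R ⧸ p.asIdeal) ≃ₗ[R]
      ∀ p : PrimeSpectrum R, R ⧸ p.asIdeal :=
    DirectSum.linearEquivFunOnFintype R _ _
  constructor
  · exact Module.Finite.equiv e.symm
  · intro M hM
    refine ExtClosure.of_finite ?_ M hM
    intro p hp
    -- R ⧸ p is a direct summand of G
    refine ExtClosure.summand (ModuleCat.of R (R ⧸ p))
      (ModuleCat.of R (ULift (∀ q : {q : PrimeSpectrum R // q ≠ ⟨p, hp⟩}, R ⧸ q.1.asIdeal)))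
      ((e.trans (LinearEquiv.piSplitAt' (⟨p, hp⟩ : PrimeSpectrum R) _)).trans
        (LinearEquiv.prodCongr (LinearEquiv.refl R _)
          (LinearEquiv.symm (ULift.moduleEquiv :
            ULift (∀ q : {q : PrimeSpectrum R // q ≠ ⟨p, hp⟩}, R ⧸ q.1.asIdeal) ≃ₗ[R] _))))
      ExtClosure.base
end
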